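/- arXiv:1409.6277 — 2 statements merged into one kernel-verified Lean document; each statement's English description precedes it below -/
import Mathlib

section
/- The total number of vertex-block incidences over all vertex-resilient blocks of a directed graph on n ≥ 1 vertices is at most 2n − 2, i.e., ∑_B |B| ≤ 2n − 2 where the sum is over all vertex-resilient blocks B. -/
variable {V : Type*}

/-- Mutual reachability (strong connectivity of a pair) in the digraph `E`. -/
def SConn (E : V → V → Prop) (u v : V) : Prop :=
  Relation.ReflTransGen E u v ∧ Relation.ReflTransGen E v u

/-- The digraph obtained from `E` by deleting vertex `w` (and incident edges). -/
def delV (E : V → V → Prop) (w : V) : V → V → Prop :=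
  fun a b => E a b ∧ a ≠ w ∧ b ≠ w

/-- The digraph obtained from `E` by deleting the single edge `(a,b)`. -/
def delE (E : V → V → Prop) (a b : V) : V → V → Prop :=
  fun x y => E x y ∧ ¬(x = a ∧ y = b)

/-- `u` and `v` are vertex-resilient: they are distinct and remain strongly
connected after deletion of any single other vertex. -/
def VRes (E : V → V → Prop) (u v : V) : Prop :=
  u ≠ v ∧ ∀ w, w ≠ u → w ≠ v → SConn (delV E w) u v

/-- A vertex-resilient block: a maximal set of size ≥ 2 of pairwise
vertex-resilient vertices. -/
def IsVRBlock (E : V → V → Prop) (B : Set V) : Prop :=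
  B.Pairwise (VRes E) ∧ (∃ a ∈ B, ∃ b ∈ B, a ≠ b) ∧
    ∀ B' : Set V, B ⊆ B' → B'.Pairwise (VRes E) → B' = B

/-- `l` is (the vertex list of) a directed path from `u` to `v` in `E`. -/
def IsPathList (E : V → V → Prop) (u v : V) (l : List V) : Prop :=
  l.Chain' E ∧ l.head? = some u ∧ l.getLast? = some v

/-- The internal vertices of a path given as a vertex list. -/
def internalsL (l : List V) : List V := (l.drop 1).dropLast

/-- The edges of a path given as a vertex list. -/
def edgesOfL (l : List V) : List (V × V) := l.zip l.tail

/-- There exist two internally vertex-disjoint (simple, distinct) paths from `u` to `v`. -/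
def TwoVPaths (E : V → V → Prop) (u v : V) : Prop :=
  ∃ l₁ l₂ : List V, IsPathList E u v l₁ ∧ IsPathList E u v l₂ ∧
    l₁.Nodup ∧ l₂.Nodup ∧ l₁ ≠ l₂ ∧ ∀ x ∈ internalsL l₁, x ∉ internalsL l₂

/-- `u` and `v` are 2-vertex-connected. -/
def TwoVConn (E : V → V → Prop) (u v : V) : Prop :=
  u ≠ v ∧ TwoVPaths E u v ∧ TwoVPaths E v u

/-- There exist two edge-disjoint paths from `u` to `v`. -/
def TwoEPaths (E : V → V → Prop) (u v : V) : Prop :=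
  ∃ l₁ l₂ : List V, IsPathList E u v l₁ ∧ IsPathList E u v l₂ ∧
    ∀ e ∈ edgesOfL l₁, e ∉ edgesOfL l₂

/-- `u` and `v` are 2-edge-connected. -/
def TwoEConn (E : V → V → Prop) (u v : V) : Prop :=
  u ≠ v ∧ TwoEPaths E u v ∧ TwoEPaths E v u

/-- A 2-vertex-connected block. -/
def Is2VBlock (E : V → V → Prop) (B : Set V) : Prop :=
  B.Pairwise (TwoVConn E) ∧ (∃ a ∈ B, ∃ b ∈ B, a ≠ b) ∧
    ∀ B' : Set V, B ⊆ B' → B'.Pairwise (TwoVConn E) → B' = B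

/-- A 2-edge-connected block. -/
def Is2EBlock (E : V → V → Prop) (B : Set V) : Prop :=
  B.Pairwise (TwoEConn E) ∧ (∃ a ∈ B, ∃ b ∈ B, a ≠ b) ∧
    ∀ B' : Set V, B ⊆ B' → B'.Pairwise (TwoEConn E) → B' = B

/-- The digraph `E` is strongly connected. -/
def StronglyConn (E : V → V → Prop) : Prop :=
  ∀ u v, Relation.ReflTransGen E u v

/-- `(a,b)` is a strong bridge of the strongly connected digraph `E`. -/
def IsStrongBridge (E : V → V → Prop) (a b : V) : Prop :=
  E a b ∧ ¬ StronglyConn (delE E a b)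

/-- `u` dominates `w` in the flow graph with start vertex `s`:
every path from `s` to `w` contains `u`. -/
def DomOf (E : V → V → Prop) (s u w : V) : Prop :=
  ∀ l : List V, IsPathList E s w l → u ∈ l

/-- `d` is the immediate dominator of `w` in the flow graph with start `s`:
the proper dominator of `w` dominated by all proper dominators of `w`. -/
def IdomOf (E : V → V → Prop) (s d w : V) : Prop :=
  d ≠ w ∧ DomOf E s d w ∧ ∀ u, u ≠ w → DomOf E s u w → DomOf E s u d

/-- The block graph `F` of the digraph `E`: the bipartite undirected graph on the
vertices of `E` together with its vertex-resilient blocks, a vertex `u` being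
adjacent to a block node `B` exactly when `u ∈ B`. -/
def blockGraph (E : V → V → Prop) :
    SimpleGraph (V ⊕ {B : Set V // IsVRBlock E B}) where
  Adj a b := ∃ u B, u ∈ B.1 ∧
    ((a = Sum.inl u ∧ b = Sum.inr B) ∨ (a = Sum.inr B ∧ b = Sum.inl u))
  symm := ⟨by
    rintro a b ⟨u, B, hm, (⟨rfl, rfl⟩ | ⟨rfl, rfl⟩)⟩
    · exact ⟨u, B, hm, Or.inr ⟨rfl, rfl⟩⟩
    · exact ⟨u, B, hm, Or.inl ⟨rfl, rfl⟩⟩⟩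
  loopless := ⟨by
    rintro a ⟨u, B, hm, (⟨rfl, h⟩ | ⟨rfl, h⟩)⟩ <;> simp at h⟩

section Aux
variable {E : V → V → Prop}

lemma sconn_refl (a : V) : SConn E a a := ⟨.refl, .refl⟩

lemma sconn_symm {a b : V} (h : SConn E a b) : SConn E b a := ⟨h.2, h.1⟩

lemma sconn_trans {a b c : V} (h1 : SConn E a b) (h2 : SConn E b c) : SConn E a c :=
  ⟨h1.1.trans h2.1, h2.2.trans h1.2⟩

lemma vres_symm {a b : V} (h : VRes E a b) : VRes E b a :=
  ⟨h.1.symm, fun w h1 h2 => sconn_symm (h.2 w h2 h1)⟩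

lemma four_point {u v x y : V} (huv : u ≠ v) (hxy : x ≠ y)
    (h1 : VRes E x u) (h2 : VRes E x v) (h3 : VRes E y u) (h4 : VRes E y v) :
    VRes E x y := by
  refine ⟨hxy, fun w hwx hwy => ?_⟩
  by_cases hwu : w = u
  · have hwv : w ≠ v := hwu ▸ huv
    exact sconn_trans (h2.2 w hwx hwv) (sconn_symm (h4.2 w hwy hwv))
  · exact sconn_trans (h1.2 w hwx hwu) (sconn_symm (h3.2 w hwy hwu))

lemma chain_sconn (w : V) :
    ∀ (l : List V) (a b : V), List.Chain (VRes E) a (l ++ [b]) →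
      w ∉ a :: (l ++ [b]) → SConn (delV E w) a b := by
  intro l
  induction l with
  | nil =>
    intro a b h hw
    simp only [List.nil_append, List.Chain, List.chain_cons] at h
    simp only [List.nil_append, List.mem_cons, List.mem_singleton, not_or] at hw
    exact h.1.2 w (Ne.intro hw.1) (Ne.intro hw.2.1)
  | cons x t ih =>
    intro a b h hw
    simp only [List.cons_append, List.Chain, List.chain_cons] at h
    simp only [List.cons_append, List.mem_cons, not_or] at hw
    have h1 : SConn (delV E w) a x := h.1.2 w (Ne.intro hw.1) (Ne.intro hw.2.1)
    have h2 : SConn (delV E w) x b := by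
      apply ih x b h.2
      simp only [List.mem_cons, not_or]
      exact ⟨hw.2.1, hw.2.2⟩
    exact sconn_trans h1 h2

lemma block_pair {B : Set V} (hB : IsVRBlock E B) {x y : V} (hx : x ∈ B) (hy : y ∈ B)
    (hxy : x ≠ y) : VRes E x y := hB.1 hx hy hxy

lemma block_merge {B B' : Set V} (hB : IsVRBlock E B) (hB' : IsVRBlock E B') {u v : V}
    (hu : u ∈ B) (hu' : u ∈ B') (hv : v ∈ B) (hv' : v ∈ B') (huv : u ≠ v) : B = B' := by
  have cross : ∀ x ∈ B, ∀ y ∈ B', x ≠ y → VRes E x y := by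
    intro x hx y hy hxy
    by_cases hx' : x ∈ B'
    · exact hB'.1 hx' hy hxy
    by_cases hy' : y ∈ B
    · exact hB.1 hx hy' hxy
    have hxu : x ≠ u := fun h => hx' (h ▸ hu')
    have hxv : x ≠ v := fun h => hx' (h ▸ hv')
    have hyu : y ≠ u := fun h => hy' (h ▸ hu)
    have hyv : y ≠ v := fun h => hy' (h ▸ hv)
    exact four_point huv hxy (hB.1 hx hu hxu) (hB.1 hx hv hxv)
      (hB'.1 hy hu' hyu) (hB'.1 hy hv' hyv)
  have hpair : (B ∪ B').Pairwise (VRes E) := by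
    rintro x (hx | hx) y (hy | hy) hxy
    · exact hB.1 hx hy hxy
    · exact cross x hx y hy hxy
    · exact vres_symm (cross y hy x hx hxy.symm)
    · exact hB'.1 hx hy hxy
  have e1 := hB.2.2 _ Set.subset_union_left hpair
  have e2 := hB'.2.2 _ Set.subset_union_right hpair
  exact e1.symm.trans e2

lemma contra {B B' : Set V} (hB : IsVRBlock E B) (hB' : IsVRBlock E B') (hne : B ≠ B')
    {a b c : V} (ha : a ∈ B) (hb : b ∈ B) (hb' : b ∈ B') (hc : c ∈ B')
    (hab : a ≠ b) (hbc : b ≠ c) (hac : a ≠ c) (h : VRes E c a) : False := by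
  have key : ∀ t ∈ B, t ≠ c → VRes E t c := by
    intro t ht htc
    by_cases hta : t = a
    · subst hta; exact vres_symm h
    by_cases htb : t = b
    · subst htb; exact hB'.1 hb' hc hbc
    · exact four_point hab htc (hB.1 ht ha hta) (hB.1 ht hb htb) h
        (hB'.1 hc hb' hbc.symm)
  have hpair : (B ∪ {c}).Pairwise (VRes E) := by
    rintro x (hx | hx) y (hy | hy) hxy
    · exact hB.1 hx hy hxy
    · exact (Set.mem_singleton_iff.mp hy) ▸ key x hx ((Set.mem_singleton_iff.mp hy) ▸ hxy)
    · exact vres_symm ((Set.mem_singleton_iff.mp hx) ▸ key y hy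
        ((Set.mem_singleton_iff.mp hx) ▸ hxy.symm))
    · exact absurd ((Set.mem_singleton_iff.mp hx).trans (Set.mem_singleton_iff.mp hy).symm) hxy
  have heq := hB.2.2 (B ∪ {c}) Set.subset_union_left hpair
  have hcB : c ∈ B := heq ▸ (Set.mem_union_right _ rfl)
  exact hne (block_merge hB hB' hb hb' hcB hc hbc)

end Aux
section Chains
variable {E : V → V → Prop}

/-- A chain of blocks and vertices: `vs = [v_k, ..., v_0]`, `Bs = [B_k, ..., B_0]`,
newest first; `v_i ∈ B_i`, all blocks in `s`, consecutive `v_{i+1} ∈ B_i` and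
`B_{i+1} ≠ B_i`. -/
def Ch (s : Finset (Set V)) : List V → List (Set V) → Prop
  | [v], [B] => v ∈ B ∧ B ∈ s
  | u :: v :: vs, B :: B' :: Bs => u ∈ B ∧ B ∈ s ∧ u ∈ B' ∧ B ≠ B' ∧ Ch s (v :: vs) (B' :: Bs)
  | _, _ => False

lemma ch_head {s : Finset (Set V)} {v : V} {vs : List V} {Bs : List (Set V)}
    (h : Ch s (v :: vs) Bs) : ∃ B Bs', Bs = B :: Bs' ∧ v ∈ B ∧ B ∈ s := by
  cases vs with
  | nil =>
    cases Bs with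
    | nil => simp [Ch] at h
    | cons B Bs' =>
      cases Bs' with
      | nil => exact ⟨B, [], rfl, h.1, h.2⟩
      | cons C Cs => simp [Ch] at h
  | cons w ws =>
    cases Bs with
    | nil => simp [Ch] at h
    | cons B Bs' =>
      cases Bs' with
      | nil => simp [Ch] at h
      | cons C Cs => exact ⟨B, C :: Cs, rfl, h.1, h.2.1⟩

lemma ch_chain' {s : Finset (Set V)} (hall : ∀ B ∈ s, IsVRBlock E B) :
    ∀ (vs : List V) (Bs : List (Set V)), Ch s vs Bs → vs.Nodup → vs.Chain' (VRes E) := by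
  intro vs
  induction vs with
  | nil => intro Bs h _; exact List.isChain_nil
  | cons u t ih =>
    intro Bs h hnd
    cases t with
    | nil => exact List.isChain_singleton u
    | cons v t' =>
      cases Bs with
      | nil => simp [Ch] at h
      | cons B Bs' =>
        cases Bs' with
        | nil => simp [Ch] at h
        | cons B' Bs'' =>
          obtain ⟨huB, hBs, huB', hBB', hch⟩ := h
          obtain ⟨C, Cs, hCeq, hvC, hCs⟩ := ch_head hch
          have hvB' : v ∈ B' := by rw [hCeq] at hch; injection hCeq with h1 h2; exact h1 ▸ hvC
          have huv : u ≠ v := by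
            intro he; exact (List.nodup_cons.mp hnd).1 (he ▸ List.mem_cons_self (a := v) (l := t'))
          simp only [List.Chain', List.isChain_cons_cons]
          exact ⟨(hall B' (by rw [hCeq] at hch; injection hCeq with h1 _; exact h1 ▸ hCs)).1
              huB' hvB' huv,
            ih (B' :: Bs'') hch (List.nodup_cons.mp hnd).2⟩

end Chains
section NoCycle
variable {E : V → V → Prop}

lemma no_cycle [Fintype V] {s : Finset (Set V)} (hall : ∀ B ∈ s, IsVRBlock E B)
    (hcontact : ∀ B ∈ s, ∃ x y, x ≠ y ∧ x ∈ B ∧ y ∈ B ∧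
      (∃ C ∈ s, C ≠ B ∧ x ∈ C) ∧ (∃ C ∈ s, C ≠ B ∧ y ∈ C)) :
    ∀ (m : ℕ) (vs : List V) (Bs : List (Set V)), Ch s vs Bs → vs.Nodup →
      Fintype.card V + 1 - vs.length ≤ m → False := by
  intro m
  induction m with
  | zero =>
    intro vs Bs hch hnd hm
    have := hnd.length_le_card
    omega
  | succ m ih =>
    intro vs Bs hch hnd hm
    cases vs with
    | nil => cases Bs <;> simp [Ch] at hch
    | cons v vs' =>
    obtain ⟨B, Bs', rfl, hvB, hBs⟩ := ch_head hch
    obtain ⟨x, y, hxy, hxB, hyB, ⟨Cx, hCxs, hCxB, hxCx⟩, ⟨Cy, hCys, hCyB, hyCy⟩⟩ :=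
      hcontact B hBs
    -- choose z ≠ v among the two contacts
    obtain ⟨z, C, hzv, hzB, hCs, hCB, hzC⟩ :
        ∃ z C, z ≠ v ∧ z ∈ B ∧ C ∈ s ∧ C ≠ B ∧ z ∈ C := by
      by_cases hxv : x = v
      · exact ⟨y, Cy, fun h => hxy (hxv.trans h.symm), hyB, hCys, hCyB, hyCy⟩
      · exact ⟨x, Cx, hxv, hxB, hCxs, hCxB, hxCx⟩
    by_cases hzvs : z ∈ v :: vs'
    · -- cycle case
      have hzvs' : z ∈ vs' := by
        rcases List.mem_cons.mp hzvs with h | h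
        · exact absurd h hzv
        · exact h
      obtain ⟨l₁, l₂, hsp⟩ := List.append_of_mem hzvs'
      cases l₁ with
      | nil =>
        -- vs' = z :: l₂ : immediate two-point merge
        subst hsp
        cases Bs' with
        | nil => simp [Ch] at hch
        | cons B' Bs'' =>
          obtain ⟨_, _, hvB', hBB', hch'⟩ := hch
          obtain ⟨B'', _, heq, hzB', hB's⟩ := ch_head hch'
          injection heq with h1 _
          subst h1
          exact hBB' (block_merge (hall B hBs) (hall B' hB's) hvB hvB' hzB hzB' hzv.symm)
      | cons w2 l₁'' =>
        subst hsp
        cases Bs' with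
        | nil => simp [Ch] at hch
        | cons B' Bs'' =>
          obtain ⟨_, _, hvB', hBB', hch'⟩ := id hch
          obtain ⟨B'', _, heq, hw2B', hB's⟩ := ch_head hch'
          injection heq with h1 _
          subst h1
          -- the cycle vertex list
          set cyc : List V := v :: w2 :: (l₁'' ++ [z]) with hcyc
          have hpre : cyc <+: v :: w2 :: (l₁'' ++ z :: l₂) := ⟨l₂, by simp [hcyc]⟩
          have hndc : cyc.Nodup := hnd.sublist hpre.sublist
          have hchainc : cyc.Chain' (VRes E) :=
            (ch_chain' hall _ _ hch hnd).prefix hpre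
          have hvw2 : v ≠ w2 := by
            intro h; rw [List.nodup_cons] at hndc; exact hndc.1 (h ▸ List.mem_cons_self (a := _) (l := _))
          have hvtail : v ∉ w2 :: (l₁'' ++ [z]) := (List.nodup_cons.mp hndc).1
          have hw2z : w2 ≠ z := by
            have := (List.nodup_cons.mp hndc).2
            rw [List.nodup_cons] at this
            intro h; exact this.1 (h ▸ List.mem_append_right _ (List.mem_singleton_self _))
          have hvres : VRes E w2 z := by
            refine ⟨hw2z, fun d hdw hdz => ?_⟩
            by_cases hdv : d = v
            · -- long route through the cycle
              apply chain_sconn d l₁'' w2 z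
              · exact hchainc.tail
              · subst hdv; exact hvtail
            · -- short route w2 → v → z
              have hc : List.Chain (VRes E) w2 ([v] ++ [z]) := by
                refine List.Chain.cons ?_ (List.Chain.cons ?_ List.Chain.nil)
                · exact vres_symm ((hall B' hB's).1 hvB' hw2B' hvw2)
                · exact (hall B hBs).1 hvB hzB (Ne.symm hzv)
              apply chain_sconn d [v] w2 z hc
              simp only [List.cons_append, List.nil_append, List.mem_cons,
                List.mem_singleton, not_or]
              exact ⟨hdw, hdv, hdz, List.not_mem_nil (a := d)⟩
          exact contra (hall B hBs) (hall B' hB's) hBB' hzB hvB hvB' hw2B'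
            hzv hvw2 hw2z.symm hvres
    · -- extension case
      have hch2 : Ch s (z :: v :: vs') (C :: B :: Bs') := ⟨hzC, hCs, hzB, hCB, hch⟩
      have hnd2 : (z :: v :: vs').Nodup := List.nodup_cons.mpr ⟨hzvs, hnd⟩
      apply ih _ _ hch2 hnd2
      simp only [List.length_cons] at hm ⊢
      omega

end NoCycle
section Counting
variable {E : V → V → Prop}

lemma block_two {B : Set V} [Finite V] (hB : IsVRBlock E B) : 2 ≤ B.ncard := by
  obtain ⟨a, ha, b, hb, hab⟩ := hB.2.1
  have : 1 < B.ncard := (Set.one_lt_ncard (Set.toFinite B)).mpr ⟨a, ha, b, hb, hab⟩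
  omega

lemma exists_leaf [Fintype V] [DecidableEq (Set V)] {s : Finset (Set V)} (hall : ∀ B ∈ s, IsVRBlock E B)
    (hne : s.Nonempty) :
    ∃ B ∈ s, (B ∩ ⋃₀ ↑(s.erase B)).ncard ≤ 1 := by
  by_contra hfail
  push_neg at hfail
  have hcontact : ∀ B ∈ s, ∃ x y, x ≠ y ∧ x ∈ B ∧ y ∈ B ∧
      (∃ C ∈ s, C ≠ B ∧ x ∈ C) ∧ (∃ C ∈ s, C ≠ B ∧ y ∈ C) := by
    intro B hB
    have h2 := hfail B hB
    rw [Set.one_lt_ncard (Set.toFinite _)] at h2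
    obtain ⟨x, hx, y, hy, hxy⟩ := h2
    obtain ⟨Cx, hCx, hxCx⟩ := hx.2
    obtain ⟨Cy, hCy, hyCy⟩ := hy.2
    rw [Finset.mem_coe, Finset.mem_erase] at hCx hCy
    exact ⟨x, y, hxy, hx.1, hy.1, ⟨Cx, hCx.2, hCx.1, hxCx⟩, ⟨Cy, hCy.2, hCy.1, hyCy⟩⟩
  obtain ⟨B₀, hB₀⟩ := hne
  obtain ⟨a, ha, -⟩ := (hall B₀ hB₀).2.1
  exact no_cycle hall hcontact (Fintype.card V + 1) [a] [B₀] ⟨ha, hB₀⟩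
    (List.nodup_singleton a) (by omega)

lemma count [Fintype V] [DecidableEq (Set V)] :
    ∀ (k : ℕ) (s : Finset (Set V)), s.card ≤ k → (∀ B ∈ s, IsVRBlock E B) → s.Nonempty →
      (∑ B ∈ s, (B.ncard - 1)) + 1 ≤ (⋃₀ (↑s : Set (Set V))).ncard := by
  intro k
  induction k with
  | zero =>
    intro s hk _ hne
    exact absurd (Finset.card_eq_zero.mp (Nat.le_zero.mp hk)) hne.ne_empty
  | succ k ih =>
    intro s hk hall hne
    obtain ⟨B, hBs, hleaf⟩ := exists_leaf hall hne
    by_cases hsing : s.erase B = ∅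
    · have hs : s = {B} := by
        apply Finset.eq_singleton_iff_unique_mem.mpr
        refine ⟨hBs, fun x hx => ?_⟩
        by_contra hxB
        exact (Finset.notMem_empty x) (hsing ▸ Finset.mem_erase.mpr ⟨hxB, hx⟩)
      subst hs
      have h2 := block_two (hall B hBs)
      simp only [Finset.sum_singleton, Finset.coe_singleton, Set.sUnion_singleton]
      omega
    · have hne' : (s.erase B).Nonempty := Finset.nonempty_of_ne_empty hsing
      have hcard : (s.erase B).card ≤ k := by
        have := Finset.card_erase_of_mem hBs
        have := Finset.card_pos.mpr hne
        omega
      have hih := ih (s.erase B) hcard (fun C hC => hall C (Finset.mem_of_mem_erase hC)) hne'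
      set U' : Set V := ⋃₀ ↑(s.erase B) with hU'
      have hUeq : (⋃₀ (↑s : Set (Set V))) = B ∪ U' := by
        conv_lhs => rw [← Finset.insert_erase hBs]
        rw [Finset.coe_insert, Set.sUnion_insert]
      have hsplit : (B ∩ U').ncard + (B \ U').ncard = B.ncard :=
        Set.ncard_inter_add_ncard_diff_eq_ncard B U' (Set.toFinite B)
      have hdisj : Disjoint (B \ U') U' := Set.disjoint_sdiff_left
      have huni : (B ∪ U').ncard = (B \ U').ncard + U'.ncard := by
        rw [← Set.diff_union_self]
        exact Set.ncard_union_eq hdisj (Set.toFinite _) (Set.toFinite _)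
      have hsum : ∑ C ∈ s, (C.ncard - 1) = (B.ncard - 1) + ∑ C ∈ s.erase B, (C.ncard - 1) := by
        rw [← Finset.add_sum_erase s _ hBs]
      have h2 := block_two (hall B hBs)
      rw [hUeq, huni, hsum]
      omega

end Counting


/-- the total number of vertex-block incidences over all
vertex-resilient blocks is at most `2n - 2`. -/
theorem stmt5 [Fintype V] (E : V → V → Prop) (hn : 1 ≤ Fintype.card V) :
    ∑ᶠ B ∈ {B : Set V | IsVRBlock E B}, B.ncard ≤ 2 * Fintype.card V - 2 := by
  classical
  have hfin : {B : Set V | IsVRBlock E B}.Finite := Set.toFinite _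
  rw [← hfin.coe_toFinset, finsum_mem_coe_finset]
  set s : Finset (Set V) := hfin.toFinset with hs
  have hall : ∀ B ∈ s, IsVRBlock E B := fun B hB => (Set.Finite.mem_toFinset hfin).mp hB
  rcases s.eq_empty_or_nonempty with he | hne
  · rw [he]; simp only [Finset.sum_empty]; omega
  · have hcount := count s.card s le_rfl hall hne
    have hUle : (⋃₀ (↑s : Set (Set V))).ncard ≤ Fintype.card V := by
      have := Set.ncard_le_ncard (Set.subset_univ (⋃₀ (↑s : Set (Set V)))) Set.finite_univ
      rwa [Set.ncard_univ, Nat.card_eq_fintype_card] at this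
    have hterm : ∀ B ∈ s, B.ncard = (B.ncard - 1) + 1 := by
      intro B hB; have := block_two (hall B hB); omega
    have hsum : ∑ B ∈ s, B.ncard = (∑ B ∈ s, (B.ncard - 1)) + s.card := by
      rw [Finset.sum_congr rfl hterm, Finset.sum_add_distrib, Finset.sum_const, smul_eq_mul,
        mul_one]
    have hcard : s.card ≤ ∑ B ∈ s, (B.ncard - 1) := by
      calc s.card = ∑ _B ∈ s, 1 := by rw [Finset.sum_const, smul_eq_mul, mul_one]
        _ ≤ ∑ B ∈ s, (B.ncard - 1) :=
          Finset.sum_le_sum (fun B hB => by have := block_two (hall B hB); omega)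
    omega
end

section
/- Every tree of the block forest F of a digraph G, rooted arbitrarily, satisfies: two distinct vertices u, w of G are vertex-resilient if and only if, in the rooted forest F, u and w are siblings or one is the grandparent of the other. -/
variable {V : Type*}

lemma SConn.symm' {D : V → V → Prop} {u v : V} (h : SConn D u v) : SConn D v u := And.symm h

lemma SConn.trans' {D : V → V → Prop} {u v w : V} (h : SConn D u v) (h' : SConn D v w) :
    SConn D u w := ⟨h.1.trans h'.1, h'.2.trans h.2⟩

lemma SConn.refl' {D : V → V → Prop} {u : V} : SConn D u u :=
  ⟨Relation.ReflTransGen.refl, Relation.ReflTransGen.refl⟩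

lemma VRes.symm' {E : V → V → Prop} {a b : V} (h : VRes E a b) : VRes E b a :=
  ⟨h.1.symm, fun z h1 h2 => (h.2 z h2 h1).symm'⟩

/-- S0: common VRes neighbours x ≠ y force resilience. -/
lemma vres_of_common {E : V → V → Prop} {a b x y : V} (hxy : x ≠ y) (hab : a ≠ b)
    (hax : VRes E a x) (hay : VRes E a y) (hbx : VRes E b x) (hby : VRes E b y) :
    VRes E a b := by
  refine ⟨hab, fun z hza hzb => ?_⟩
  by_cases hzx : z = x
  · subst hzx
    exact (hay.2 z hza hxy).trans' (hby.2 z hzb hxy).symm'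
  · exact (hax.2 z hza hzx).trans' (hbx.2 z hzb hzx).symm'

lemma head_sconn {E : V → V → Prop} {z : V} :
    ∀ (l : List V) (a : V), (a :: l).Chain' (VRes E) → z ∉ (a :: l) →
      ∀ x ∈ (a :: l), SConn (delV E z) a x := by
  intro l
  induction l with
  | nil => intro a _ _ x hx; simp at hx; subst hx; exact SConn.refl'
  | cons b t ih =>
    intro a hch hz x hx
    have hzb : z ∉ b :: t := fun h => hz (List.mem_cons_of_mem _ h)
    have hza : z ≠ a := fun h => hz (h ▸ List.mem_cons_self)
    have hvab : VRes E a b := (List.isChain_cons_cons.mp hch).1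
    have hab : SConn (delV E z) a b :=
      hvab.2 z hza (fun h => hz (by simp [h]))
    rcases List.mem_cons.mp hx with rfl | hx'
    · exact SConn.refl'
    · exact hab.trans' (ih b (List.isChain_cons_cons.mp hch).2 hzb x hx')

lemma chain_pair_sconn {E : V → V → Prop} {z : V} {l : List V}
    (hch : l.Chain' (VRes E)) (hz : z ∉ l) :
    ∀ x ∈ l, ∀ y ∈ l, SConn (delV E z) x y := by
  cases l with
  | nil => intro x hx; simp at hx
  | cons a t =>
    intro x hx y hy
    exact (head_sconn t a hch hz x hx).symm'.trans' (head_sconn t a hch hz y hy)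

/-- CYC: a nodup cyclic VRes chain is pairwise vertex resilient. -/
lemma cyc_pairwise {E : V → V → Prop} {l : List V}
    (hnd : l.Nodup) (hch : l.Chain' (VRes E))
    (hcyc : ∀ a b, l.head? = some a → l.getLast? = some b → VRes E b a) :
    ∀ x ∈ l, ∀ y ∈ l, x ≠ y → VRes E x y := by
  intro x hx y hy hxy
  refine ⟨hxy, fun z hzx hzy => ?_⟩
  by_cases hzl : z ∈ l
  · obtain ⟨l1, l2, rfl⟩ := List.append_of_mem hzl
    have hnd1 : z ∉ l1 := by
      intro h
      exact (List.nodup_append'.mp hnd).2.2 h (List.mem_cons_self)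
    have hnd2 : z ∉ l2 := by
      have := (List.nodup_append.mp hnd).2.1
      exact fun h => (List.nodup_cons.mp this).1 h
    have hch1 : l1.Chain' (VRes E) := (List.isChain_append.mp hch).1
    have hch2 : l2.Chain' (VRes E) :=
      ((List.isChain_cons.mp (List.isChain_append.mp hch).2.1)).2
    -- chain on l2 ++ l1
    have hch' : (l2 ++ l1).Chain' (VRes E) := by
      rw [List.Chain', List.isChain_append]
      refine ⟨hch2, hch1, fun p hp q hq => ?_⟩
      -- p = last of l2 = last of whole list; q = head of l1 = head of whole
      apply hcyc
      · rw [List.head?_append, hq]; rfl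
      · rw [List.getLast?_append]
        have : (z :: l2).getLast? = some p := by
          cases l2 with
          | nil => simp at hp
          | cons c t => rw [List.getLast?_cons_cons]; exact hp
        rw [this]; rfl
    have hxm : x ∈ l2 ++ l1 := by
      rcases List.mem_append.mp hx with h | h
      · exact List.mem_append.mpr (Or.inr h)
      · rcases List.mem_cons.mp h with rfl | h
        · exact absurd rfl hzx.symm
        · exact List.mem_append.mpr (Or.inl h)
    have hym : y ∈ l2 ++ l1 := by
      rcases List.mem_append.mp hy with h | h
      · exact List.mem_append.mpr (Or.inr h)
      · rcases List.mem_cons.mp h with rfl | h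
        · exact absurd rfl hzy.symm
        · exact List.mem_append.mpr (Or.inl h)
    have hzm : z ∉ l2 ++ l1 := by
      intro h; rcases List.mem_append.mp h with h | h
      exacts [hnd2 h, hnd1 h]
    exact chain_pair_sconn hch' hzm x hxm y hym
  · exact chain_pair_sconn hch hzl x hx y hy

/-- S1: two blocks sharing two vertices are equal. -/
lemma block_eq_of_two {E : V → V → Prop} {B1 B2 : Set V} {x y : V}
    (h1 : IsVRBlock E B1) (h2 : IsVRBlock E B2)
    (hx1 : x ∈ B1) (hx2 : x ∈ B2) (hy1 : y ∈ B1) (hy2 : y ∈ B2) (hxy : x ≠ y) :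
    B1 = B2 := by
  have hpair : (B1 ∪ B2).Pairwise (VRes E) := by
    intro a ha b hb hab
    rcases ha with ha | ha <;> rcases hb with hb | hb
    · exact h1.1 ha hb hab
    · -- a ∈ B1, b ∈ B2
      by_cases hax : a = x
      · exact h2.1 (hax ▸ hx2) hb hab
      by_cases hay : a = y
      · exact h2.1 (hay ▸ hy2) hb hab
      by_cases hbx : b = x
      · exact h1.1 ha (hbx ▸ hx1) hab
      by_cases hby : b = y
      · exact h1.1 ha (hby ▸ hy1) hab
      exact vres_of_common hxy hab (h1.1 ha hx1 hax) (h1.1 ha hy1 hay)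
        (h2.1 hb hx2 hbx) (h2.1 hb hy2 hby)
    · by_cases hax : a = x
      · exact h1.1 (hax ▸ hx1) hb hab
      by_cases hay : a = y
      · exact h1.1 (hay ▸ hy1) hb hab
      by_cases hbx : b = x
      · exact h2.1 ha (hbx ▸ hx2) hab
      by_cases hby : b = y
      · exact h2.1 ha (hby ▸ hy2) hab
      exact vres_of_common hxy hab (h2.1 ha hx2 hax) (h2.1 ha hy2 hay)
        (h1.1 hb hx1 hbx) (h1.1 hb hy1 hby)
    · exact h2.1 ha hb hab
  have e1 : B1 ∪ B2 = B1 := h1.2.2 _ Set.subset_union_left hpair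
  have e2 : B1 ∪ B2 = B2 := h2.2.2 _ Set.subset_union_right hpair
  rw [← e1, e2]

/-- Zorn: extend a VRes pair to a block. -/
lemma exists_block {E : V → V → Prop} {u w : V} (h : VRes E u w) :
    ∃ B : Set V, IsVRBlock E B ∧ u ∈ B ∧ w ∈ B := by
  set S : Set (Set V) := {T | T.Pairwise (VRes E)} with hS
  have hpair0 : ({u, w} : Set V) ∈ S := by
    intro a ha b hb hab
    rcases ha with rfl | ha <;> rcases hb with rfl | hb
    · exact absurd rfl hab
    · exact (Set.eq_of_mem_singleton hb) ▸ h
    · exact (Set.eq_of_mem_singleton ha) ▸ h.symm'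
    · exact absurd (ha.trans hb.symm) hab
  have hch : ∀ c ⊆ S, IsChain (· ⊆ ·) c → c.Nonempty →
      ∃ ub ∈ S, ∀ s ∈ c, s ⊆ ub := by
    intro c hcS hchain hcne
    refine ⟨⋃₀ c, ?_, fun s hs => Set.subset_sUnion_of_mem hs⟩
    intro a ha b hb hab
    obtain ⟨s, hsc, has⟩ := ha
    obtain ⟨t, htc, hbt⟩ := hb
    rcases hchain.total hsc htc with hst | hts
    · exact hcS htc (hst has) hbt hab
    · exact hcS hsc has (hts hbt) hab
  obtain ⟨M, hsub, hM⟩ := zorn_subset_nonempty S hch _ hpair0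
  refine ⟨M, ⟨hM.1, ⟨u, hsub (by simp), w, hsub (by simp), h.1⟩, ?_⟩,
    hsub (by simp), hsub (by simp)⟩
  intro B' hMB' hB'
  exact (hM.eq_of_le hB' hMB').symm

lemma head_ne_last {α : Type*} {l : List α} {a b : α} (hnd : l.Nodup)
    (hlen : 2 ≤ l.length) (ha : l.head? = some a) (hb : l.getLast? = some b) : a ≠ b := by
  cases l with
  | nil => simp at ha
  | cons c t =>
    cases t with
    | nil => simp at hlen
    | cons d s =>
      have ha' : c = a := by simpa using ha
      have hb' : b ∈ d :: s := by
        have : (c :: d :: s).getLast? = (d :: s).getLast? := List.getLast?_cons_cons ..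
        exact List.mem_of_mem_getLast? (by rw [← this]; exact hb)
      subst ha'
      exact fun h => (List.nodup_cons.mp hnd).1 (h ▸ hb')

lemma pair_cycle_false {E : V → V → Prop}
    (P : List (V × {B : Set V // IsVRBlock E B}))
    (hlen : 2 ≤ P.length)
    (hndv : (P.map Prod.fst).Nodup)
    (hndB : (P.map Prod.snd).Nodup)
    (hmem : ∀ p ∈ P, p.1 ∈ p.2.1)
    (hch : P.Chain' (fun a b => a.1 ∈ b.2.1))
    (hcyc : ∀ a b, P.head? = some a → P.getLast? = some b → b.1 ∈ a.2.1) : False := by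
  set vs := P.map Prod.fst with hvs
  -- vs is a VRes chain
  have hchv : vs.Chain' (VRes E) := by
    rw [hvs, List.Chain', List.isChain_map, List.isChain_iff_getElem]
    intro i h
    have h1 : (P.get ⟨i, by omega⟩).1 ∈ (P.get ⟨i+1, by omega⟩).2.1 := by
      have := List.isChain_iff_getElem.mp hch i (by simpa using h)
      simpa using this
    have h2 : (P.get ⟨i+1, by omega⟩).1 ∈ (P.get ⟨i+1, by omega⟩).2.1 :=
      hmem _ (List.get_mem ..)
    have h3 : (P.get ⟨i, by omega⟩).1 ≠ (P.get ⟨i+1, by omega⟩).1 := by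
      have hpw : P.Pairwise (fun a b => a.1 ≠ b.1) := List.pairwise_map.mp hndv
      have := List.isChain_iff_getElem.mp hpw.isChain i (by simpa using h)
      simpa using this
    exact (P.get ⟨i+1, by omega⟩).2.2.1 h1 h2 h3
  have hlenv : 2 ≤ vs.length := by simpa [hvs] using hlen
  obtain ⟨p₀, P', rfl⟩ : ∃ p₀ P', P = p₀ :: P' := by
    cases P with
    | nil => simp at hlen
    | cons a t => exact ⟨a, t, rfl⟩
  obtain ⟨p₁, rest, rfl⟩ : ∃ p₁ rest, P' = p₁ :: rest := by
    cases P' with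
    | nil => simp at hlen
    | cons a t => exact ⟨a, t, rfl⟩
  obtain ⟨q, hq⟩ : ∃ q, (p₀ :: p₁ :: rest).getLast? = some q :=
    ⟨_, List.getLast?_eq_getLast (by simp)⟩
  have hqmem : q ∈ p₀ :: p₁ :: rest := List.mem_of_mem_getLast? hq
  have hqB₀ : q.1 ∈ p₀.2.1 := hcyc p₀ q rfl hq
  have hq_vs : q.1 ∈ vs := List.mem_map_of_mem hqmem
  have hlastvs : vs.getLast? = some q.1 := by
    rw [hvs, List.getLast?_map, hq]; rfl
  have hx_ne_y : p₀.1 ≠ q.1 := head_ne_last hndv hlenv rfl hlastvs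
  have hcycv : ∀ a b, vs.head? = some a → vs.getLast? = some b → VRes E b a := by
    intro a b ha hb
    have ha' : p₀.1 = a := by simpa [hvs] using ha
    have hb' : q.1 = b := by rw [hlastvs] at hb; simpa using hb
    subst ha'; subst hb'
    exact p₀.2.2.1 hqB₀ (hmem p₀ (by simp)) hx_ne_y.symm
  have hvres : ∀ x ∈ vs, ∀ y ∈ vs, x ≠ y → VRes E x y := cyc_pairwise hndv hchv hcycv
  -- extend: all of vs lies in B₀
  have hx_vs : p₀.1 ∈ vs := by simp [hvs]
  have hxB₀ : p₀.1 ∈ p₀.2.1 := hmem p₀ (by simp)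
  have hU : ({t | t ∈ vs} ∪ p₀.2.1).Pairwise (VRes E) := by
    have key : ∀ a ∈ p₀.2.1, ∀ b ∈ vs, a ≠ b → VRes E a b := by
      intro a ha b hb hab
      by_cases hax : a = p₀.1
      · exact hvres a (hax ▸ hx_vs) b hb hab
      by_cases hay : a = q.1
      · exact hvres a (hay ▸ hq_vs) b hb hab
      by_cases hbx : b = p₀.1
      · exact p₀.2.2.1 ha (hbx ▸ hxB₀) hab
      by_cases hby : b = q.1
      · exact p₀.2.2.1 ha (hby ▸ hqB₀) hab
      exact vres_of_common hx_ne_y hab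
        (p₀.2.2.1 ha hxB₀ hax) (p₀.2.2.1 ha hqB₀ hay)
        (hvres b hb _ hx_vs hbx) (hvres b hb _ hq_vs hby)
    intro a ha b hb hab
    rcases ha with ha | ha <;> rcases hb with hb | hb
    · exact hvres a ha b hb hab
    · exact (key b hb a ha hab.symm).symm'
    · exact key a ha b hb hab
    · exact p₀.2.2.1 ha hb hab
  have hUeq : {t | t ∈ vs} ∪ p₀.2.1 = p₀.2.1 :=
    p₀.2.2.2.2 _ Set.subset_union_right hU
  have hvsB₀ : ∀ t ∈ vs, t ∈ p₀.2.1 := by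
    intro t ht
    have : t ∈ {t | t ∈ vs} ∪ p₀.2.1 := Or.inl ht
    rwa [hUeq] at this
  -- now B₀ = B₁
  have h01 : p₀.1 ∈ p₁.2.1 := (List.isChain_cons_cons.mp hch).1
  have h11 : p₁.1 ∈ p₁.2.1 := hmem p₁ (by simp)
  have h10 : p₁.1 ∈ p₀.2.1 := hvsB₀ _ (by simp [hvs])
  have hne01 : p₀.1 ≠ p₁.1 := by
    have := List.nodup_cons.mp hndv
    exact fun h => this.1 (h ▸ List.mem_cons_self)
  have hBeq : p₀.2.1 = p₁.2.1 :=
    block_eq_of_two p₀.2.2 p₁.2.2 hxB₀ h01 h10 h11 hne01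
  have : p₀.2 = p₁.2 := Subtype.ext hBeq
  have hnB := List.nodup_cons.mp hndB
  exact hnB.1 (this ▸ List.mem_cons_self)


lemma adj_inl {E : V → V → Prop} {a : V} {x : V ⊕ {B : Set V // IsVRBlock E B}}
    (h : (blockGraph E).Adj (Sum.inl a) x) : ∃ B, x = Sum.inr B ∧ a ∈ B.1 := by
  obtain ⟨u', B', hm, (⟨h1, h2⟩ | ⟨h1, h2⟩)⟩ := h
  · exact ⟨B', h2, by rwa [Sum.inl.inj h1]⟩
  · simp at h1

lemma adj_inr {E : V → V → Prop} {B : {B : Set V // IsVRBlock E B}}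
    {x : V ⊕ {B : Set V // IsVRBlock E B}}
    (h : (blockGraph E).Adj (Sum.inr B) x) : ∃ a, x = Sum.inl a ∧ a ∈ B.1 := by
  obtain ⟨u', B', hm, (⟨h1, h2⟩ | ⟨h1, h2⟩)⟩ := h
  · simp at h1
  · exact ⟨u', h2, by rwa [Sum.inr.inj h1]⟩

def gencode {E : V → V → Prop} (P : List (V × {B : Set V // IsVRBlock E B})) :
    List (V ⊕ {B : Set V // IsVRBlock E B}) :=
  P.flatMap fun p => [Sum.inr p.2, Sum.inl p.1]

lemma gencode_nil {E : V → V → Prop} : gencode ([] : List (V × {B : Set V // IsVRBlock E B})) = [] := rfl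

lemma gencode_cons {E : V → V → Prop} (p : V × {B : Set V // IsVRBlock E B}) (t) :
    gencode (p :: t) = Sum.inr p.2 :: Sum.inl p.1 :: gencode t := rfl

lemma length_gencode {E : V → V → Prop} (P : List (V × {B : Set V // IsVRBlock E B})) :
    (gencode P).length = 2 * P.length := by
  induction P with
  | nil => rfl
  | cons p t ih => rw [gencode_cons]; simp [ih]; omega

lemma head?_gencode {E : V → V → Prop} (P : List (V × {B : Set V // IsVRBlock E B})) :
    (gencode P).head? = P.head?.map (fun p => Sum.inr p.2) := by
  cases P with
  | nil => rfl
  | cons p t => rw [gencode_cons]; rfl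

lemma getLast?_gencode {E : V → V → Prop} (P : List (V × {B : Set V // IsVRBlock E B})) :
    (gencode P).getLast? = P.getLast?.map (fun p => Sum.inl p.1) := by
  induction P with
  | nil => rfl
  | cons p t ih =>
    cases t with
    | nil => rfl
    | cons q s =>
      rw [gencode_cons, gencode_cons]
      rw [List.getLast?_cons_cons, List.getLast?_cons_cons, ← gencode_cons, ih,
        List.getLast?_cons_cons]

lemma mem_inl_gencode {E : V → V → Prop} {v : V}
    {P : List (V × {B : Set V // IsVRBlock E B})} :
    Sum.inl v ∈ gencode P ↔ v ∈ P.map Prod.fst := by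
  induction P with
  | nil => simp [gencode_nil]
  | cons p t ih => rw [gencode_cons]; simp [ih]

lemma mem_inr_gencode {E : V → V → Prop} {B : {B : Set V // IsVRBlock E B}}
    {P : List (V × {B : Set V // IsVRBlock E B})} :
    Sum.inr B ∈ gencode P ↔ B ∈ P.map Prod.snd := by
  induction P with
  | nil => simp [gencode_nil]
  | cons p t ih => rw [gencode_cons]; simp [ih]

lemma nodup_gencode {E : V → V → Prop} {P : List (V × {B : Set V // IsVRBlock E B})}
    (h : (gencode P).Nodup) : (P.map Prod.fst).Nodup ∧ (P.map Prod.snd).Nodup := by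
  induction P with
  | nil => simp
  | cons p t ih =>
    rw [gencode_cons] at h
    obtain ⟨h1, h2⟩ := List.nodup_cons.mp h
    obtain ⟨h3, h4⟩ := List.nodup_cons.mp h2
    obtain ⟨ih1, ih2⟩ := ih h4
    constructor
    · rw [List.map_cons, List.nodup_cons]
      exact ⟨fun hm => h3 (mem_inl_gencode.mpr hm), ih1⟩
    · rw [List.map_cons, List.nodup_cons]
      refine ⟨fun hm => h1 (List.mem_cons_of_mem _ (mem_inr_gencode.mpr hm)), ih2⟩

lemma chain_gencode {E : V → V → Prop} {P : List (V × {B : Set V // IsVRBlock E B})}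
    (h : (gencode P).Chain' (blockGraph E).Adj) :
    (∀ p ∈ P, p.1 ∈ p.2.1) ∧ P.Chain' (fun a b => a.1 ∈ b.2.1) := by
  induction P with
  | nil => exact ⟨by simp, List.isChain_nil⟩
  | cons p t ih =>
    rw [gencode_cons] at h
    obtain ⟨hadj1, h2⟩ := List.isChain_cons_cons.mp h
    have hp : p.1 ∈ p.2.1 := by
      obtain ⟨a, ha, hm⟩ := adj_inr hadj1
      rwa [← Sum.inl.inj ha] at hm
    cases t with
    | nil => exact ⟨by simpa using hp, List.isChain_singleton _⟩
    | cons q s =>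
      rw [gencode_cons] at h2
      obtain ⟨hadj2, h3⟩ := List.isChain_cons_cons.mp h2
      have hpq : p.1 ∈ q.2.1 := by
        obtain ⟨B, hB, hm⟩ := adj_inl hadj2
        rwa [← Sum.inr.inj hB] at hm
      obtain ⟨ih1, ih2⟩ := ih (by rw [gencode_cons]; exact h3)
      constructor
      · intro r hr
        rcases List.mem_cons.mp hr with rfl | hr'
        · exact hp
        · exact ih1 r hr'
      · exact List.isChain_cons_cons.mpr ⟨hpq, ih2⟩

lemma exists_gencode {E : V → V → Prop} :
    ∀ (n : ℕ) (C : List (V ⊕ {B : Set V // IsVRBlock E B})), C.length = n →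
      C.Chain' (blockGraph E).Adj →
      (∃ B, C.head? = some (Sum.inr B)) → (∃ v, C.getLast? = some (Sum.inl v)) →
      ∃ P, C = gencode P := by
  intro n
  induction n using Nat.strong_induction_on with
  | _ n IH =>
    intro C hlen hch ⟨B, hB⟩ ⟨v, hv⟩
    cases C with
    | nil => simp at hB
    | cons c D =>
      have hc : c = Sum.inr B := by simpa using hB
      subst hc
      cases D with
      | nil => simp at hv
      | cons d D' =>
        have hadj1 : (blockGraph E).Adj (Sum.inr B) d := (List.isChain_cons_cons.mp hch).1
        obtain ⟨a, rfl, ham⟩ := adj_inr hadj1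
        cases D' with
        | nil =>
          exact ⟨[(a, B)], rfl⟩
        | cons e D'' =>
          have hadj2 : (blockGraph E).Adj (Sum.inl a) e :=
            (List.isChain_cons_cons.mp (List.isChain_cons_cons.mp hch).2).1
          obtain ⟨B', rfl, _⟩ := adj_inl hadj2
          obtain ⟨P', hP'⟩ := IH (Sum.inr B' :: D'').length (by rw [← hlen]; simp)
            (Sum.inr B' :: D'') rfl ((List.isChain_cons_cons.mp hch).2.tail)
            ⟨B', rfl⟩ ⟨v, by rw [← hv]; rw [List.getLast?_cons_cons, List.getLast?_cons_cons]⟩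
          exact ⟨(a, B) :: P', by rw [gencode_cons, ← hP']⟩

/-- The block graph has no cycles. -/
lemma cycle_false {E : V → V → Prop} (C : List (V ⊕ {B : Set V // IsVRBlock E B}))
    (hch : C.Chain' (blockGraph E).Adj) (hnd : C.Nodup) (hlen : 3 ≤ C.length)
    (hcyc : ∀ a b, C.head? = some a → C.getLast? = some b → (blockGraph E).Adj b a) :
    False := by
  -- first, the case where the head is an `inr`
  have main : ∀ (C : List (V ⊕ {B : Set V // IsVRBlock E B})),
      C.Chain' (blockGraph E).Adj → C.Nodup → 3 ≤ C.length →
      (∀ a b, C.head? = some a → C.getLast? = some b → (blockGraph E).Adj b a) →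
      (∃ B, C.head? = some (Sum.inr B)) → False := by
    intro C hch hnd hlen hcyc ⟨B, hB⟩
    obtain ⟨b, hb⟩ : ∃ b, C.getLast? = some b := by
      cases C with
      | nil => simp at hB
      | cons c D => exact ⟨_, List.getLast?_eq_getLast (by simp)⟩
    have hadj : (blockGraph E).Adj b (Sum.inr B) := hcyc _ _ hB hb
    obtain ⟨v, rfl, hvB⟩ := adj_inr hadj.symm
    obtain ⟨P, rfl⟩ := exists_gencode C.length C rfl hch ⟨B, hB⟩ ⟨v, hb⟩
    have hPlen : 2 ≤ P.length := by
      rw [length_gencode] at hlen; omega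
    obtain ⟨hnd1, hnd2⟩ := nodup_gencode hnd
    obtain ⟨hmem, hchP⟩ := chain_gencode hch
    refine pair_cycle_false P hPlen hnd1 hnd2 hmem hchP ?_
    intro p q hp hq
    have hBp : B = p.2 := by
      rw [head?_gencode, hp] at hB
      simp only [Option.map_some] at hB
      exact (Sum.inr.inj (Option.some.inj hB)).symm
    have hvq : v = q.1 := by
      rw [getLast?_gencode, hq] at hb
      simp only [Option.map_some] at hb
      exact (Sum.inl.inj (Option.some.inj hb)).symm
    rw [hBp] at hvB
    rwa [← hvq]
  -- rotation
  cases C with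
  | nil => simp at hlen
  | cons c D =>
    cases D with
    | nil => simp at hlen
    | cons d D' =>
      cases c with
      | inr B => exact main _ hch hnd hlen hcyc ⟨B, rfl⟩
      | inl w =>
        have hadj : (blockGraph E).Adj (Sum.inl w) d := (List.isChain_cons_cons.mp hch).1
        obtain ⟨B, rfl, hwB⟩ := adj_inl hadj
        -- rotate to D ++ [c]
        refine main ((Sum.inr B :: D') ++ [Sum.inl w]) ?_ ?_ (by simpa using hlen) ?_
          ⟨B, by simp⟩
        · rw [List.Chain', List.isChain_append]
          refine ⟨hch.tail, List.isChain_singleton _, ?_⟩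
          intro x hx y hy
          have hy' : Sum.inl w = y := by simpa using hy
          subst hy'
          exact hcyc _ _ rfl (by rw [List.getLast?_cons_cons]; exact hx)
        · have hperm : (Sum.inl w :: (Sum.inr B :: D')).Perm
              ((Sum.inr B :: D') ++ [Sum.inl w]) := by
            simpa using List.perm_append_comm (l₁ := [Sum.inl w]) (l₂ := Sum.inr B :: D')
          exact hperm.nodup hnd
        · intro a b ha hb
          have ha' : Sum.inr B = a := by simpa using ha
          have hb' : Sum.inl w = b := by
            rw [List.getLast?_append] at hb
            simpa using hb
          subst ha'; subst hb'
          exact hadj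

lemma iter_stable {X : Type*} (p : X → X) {x : X} {k : ℕ} (h : p^[k+1] x = p^[k] x) :
    ∀ m, k ≤ m → p^[m] x = p^[k] x := by
  intro m hm
  induction m with
  | zero => have : k = 0 := by omega
            subst this; rfl
  | succ n ih =>
    rcases Nat.lt_or_ge k (n+1) with hlt | hge
    · have hkn : k ≤ n := by omega
      rw [Function.iterate_succ_apply', ih hkn, ← Function.iterate_succ_apply' p k x, h]
    · have : k = n + 1 := by omega
      subst this; rfl

lemma iter_ne {X : Type*} (p : X → X) {x : X} {d : ℕ}
    (hd : p^[d+1] x = p^[d] x) (hmin : ∀ m < d, p^[m+1] x ≠ p^[m] x)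
    {i j : ℕ} (hij : i < j) (hjd : j ≤ d) : p^[i] x ≠ p^[j] x := by
  intro h
  set m := j - i with hm
  have hm1 : 1 ≤ m := by omega
  have key : ∀ t, p^[i + t * m] x = p^[i] x := by
    intro t
    induction t with
    | zero => simp
    | succ t ih =>
      have e1 : i + (t+1) * m = m + (i + t * m) := by ring
      rw [e1, Function.iterate_add_apply, ih, ← Function.iterate_add_apply,
        show m + i = j by omega, ← h]
  have h2 : p^[i] x = p^[d] x := by
    have h3 := key d
    have h4 : p^[i + d * m] x = p^[d] x := iter_stable p hd _ (by nlinarith)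
    rw [← h3, h4]
  have h5 : p^[i+1] x = p^[i] x := by
    rw [Function.iterate_succ_apply', h2, ← Function.iterate_succ_apply' p d x, hd, ← h2]
  exact hmin i (by omega) h5

lemma reach_iter {E : V → V → Prop}
    {parent : (V ⊕ {B : Set V // IsVRBlock E B}) → (V ⊕ {B : Set V // IsVRBlock E B})}
    (hadj : ∀ x, parent x = x ∨ (blockGraph E).Adj x (parent x)) :
    ∀ (n : ℕ) (x), (blockGraph E).Reachable x (parent^[n] x) := by
  intro n x
  induction n with
  | zero => exact SimpleGraph.Reachable.refl x
  | succ n ih =>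
    rw [Function.iterate_succ_apply']
    rcases hadj (parent^[n] x) with he | ha
    · rw [he]; exact ih
    · exact ih.trans ha.reachable

/-- In the rooted forest, adjacency implies a parent relation one way. -/
lemma parent_tree_adj {E : V → V → Prop}
    {parent : (V ⊕ {B : Set V // IsVRBlock E B}) → (V ⊕ {B : Set V // IsVRBlock E B})}
    (hadj : ∀ x, parent x = x ∨ (blockGraph E).Adj x (parent x))
    (hfix : ∀ x, ∃ n : ℕ, parent^[n + 1] x = parent^[n] x)
    (huniq : ∀ x y, (blockGraph E).Reachable x y →
      parent x = x → parent y = y → x = y)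
    {x y : V ⊕ {B : Set V // IsVRBlock E B}}
    (hxy : (blockGraph E).Adj x y) : parent x = y ∨ parent y = x := by
  classical
  by_contra hcon
  push_neg at hcon
  obtain ⟨hpx, hpy⟩ := hcon
  set dx := Nat.find (hfix x) with hdxdef
  have hdx : parent^[dx+1] x = parent^[dx] x := Nat.find_spec (hfix x)
  have hminx : ∀ m < dx, parent^[m+1] x ≠ parent^[m] x := fun m hm => Nat.find_min _ hm
  set dy := Nat.find (hfix y) with hdydef
  have hdy : parent^[dy+1] y = parent^[dy] y := Nat.find_spec (hfix y)
  have hminy : ∀ m < dy, parent^[m+1] y ≠ parent^[m] y := fun m hm => Nat.find_min _ hm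
  -- roots are equal
  have hrx : parent (parent^[dx] x) = parent^[dx] x := by
    rw [← Function.iterate_succ_apply' parent dx x]; exact hdx
  have hry : parent (parent^[dy] y) = parent^[dy] y := by
    rw [← Function.iterate_succ_apply' parent dy y]; exact hdy
  have hreq : parent^[dx] x = parent^[dy] y := by
    refine huniq _ _ ?_ hrx hry
    exact ((reach_iter hadj dx x).symm.trans hxy.reachable).trans (reach_iter hadj dy y)
  -- first meeting point of the two chains
  have hQ : ∃ i, ∃ j, j ≤ dy ∧ parent^[i] x = parent^[j] y := ⟨dx, dy, le_refl _, hreq⟩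
  set i₀ := Nat.find hQ with hi₀def
  have hi₀dx : i₀ ≤ dx := Nat.find_le ⟨dy, le_refl _, hreq⟩
  obtain ⟨j, hjdy, hmeet⟩ : ∃ j, j ≤ dy ∧ parent^[i₀] x = parent^[j] y := Nat.find_spec hQ
  have hmini : ∀ i < i₀, ∀ j' ≤ dy, parent^[i] x ≠ parent^[j'] y := by
    intro i hi j' hj' h
    exact Nat.find_min hQ hi ⟨j', hj', h⟩
  -- degenerate cases
  have hne : x ≠ y := hxy.ne
  have hlen2 : 2 ≤ i₀ + j := by
    by_contra hlt
    push_neg at hlt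
    have h1 : i₀ = 0 ∧ j = 0 ∨ i₀ = 1 ∧ j = 0 ∨ i₀ = 0 ∧ j = 1 := by omega
    rcases h1 with ⟨h1, h2⟩ | ⟨h1, h2⟩ | ⟨h1, h2⟩ <;> rw [h1, h2] at hmeet
    · exact hne (by simpa using hmeet)
    · exact hpx (by simpa using hmeet)
    · exact hpy (by simpa [eq_comm] using hmeet)
  -- build the cycle
  set f : ℕ → (V ⊕ {B : Set V // IsVRBlock E B}) := fun i => parent^[i] x with hf
  set g : ℕ → (V ⊕ {B : Set V // IsVRBlock E B}) := fun b => parent^[b] y with hg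
  set C := (List.range (i₀+1)).map f ++ ((List.range j).map g).reverse with hC
  have hstepx : ∀ m < i₀, (blockGraph E).Adj (f m) (f (m+1)) := by
    intro m hm
    rcases hadj (parent^[m] x) with he | ha
    · exfalso
      exact iter_ne parent hdx hminx (Nat.lt_succ_self m) (by omega)
        (by rw [Function.iterate_succ_apply', he])
    · rw [hf]; simpa [Function.iterate_succ_apply'] using ha
  have hstepy : ∀ m < dy, (blockGraph E).Adj (g m) (g (m+1)) := by
    intro m hm
    rcases hadj (parent^[m] y) with he | ha
    · exfalso
      exact iter_ne parent hdy hminy (Nat.lt_succ_self m) (by omega)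
        (by rw [Function.iterate_succ_apply', he])
    · rw [hg]; simpa [Function.iterate_succ_apply'] using ha
  have hchain : C.Chain' (blockGraph E).Adj := by
    rw [hC, List.Chain', List.isChain_append]
    refine ⟨?_, ?_, ?_⟩
    · rw [List.isChain_map]
      exact (List.isChain_range_succ _ _).mpr hstepx
    · rw [List.isChain_reverse, List.isChain_map]
      cases j with
      | zero => simp
      | succ j' =>
        refine (List.isChain_range_succ _ j').mpr ?_
        intro m hm
        exact (hstepy m (by omega)).symm
    · -- junction
      intro p hp q hq
      cases j with
      | zero => simp at hq
      | succ j' =>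
        have hp' : f i₀ = p := by
          rw [List.range_succ, List.map_append, List.getLast?_append] at hp
          simpa using hp
        have hq' : g j' = q := by
          rw [List.head?_reverse] at hq
          rw [List.range_succ, List.map_append, List.getLast?_append] at hq
          simpa using hq
        subst hp'; subst hq'
        have h2 : (blockGraph E).Adj (g (j'+1)) (g j') := (hstepy j' (by omega)).symm
        have h3 : f i₀ = g (j'+1) := hmeet
        rwa [← h3] at h2
  have hinjx : ∀ a b, a ≤ dx → b ≤ dx → f a = f b → a = b := by
    intro a b ha hb h
    by_contra hne'
    rcases Nat.lt_or_ge a b with h1 | h1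
    · exact iter_ne parent hdx hminx h1 hb h
    · exact iter_ne parent hdx hminx (by omega) ha h.symm
  have hinjy : ∀ a b, a ≤ dy → b ≤ dy → g a = g b → a = b := by
    intro a b ha hb h
    by_contra hne'
    rcases Nat.lt_or_ge a b with h1 | h1
    · exact iter_ne parent hdy hminy h1 hb h
    · exact iter_ne parent hdy hminy (by omega) ha h.symm
  have hnodup : C.Nodup := by
    rw [hC, List.nodup_append']
    refine ⟨?_, ?_, ?_⟩
    · refine List.nodup_range.map_on ?_
      intro a ha b hb h
      rw [List.mem_range] at ha hb
      exact hinjx a b (by omega) (by omega) h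
    · rw [List.nodup_reverse]
      refine List.nodup_range.map_on ?_
      intro a ha b hb h
      rw [List.mem_range] at ha hb
      exact hinjy a b (by omega) (by omega) h
    · intro a ha hb
      rw [List.mem_reverse] at hb
      obtain ⟨i, hi, rfl⟩ := List.mem_map.mp ha
      obtain ⟨b, hbj, hgb⟩ := List.mem_map.mp hb
      rw [List.mem_range] at hi hbj
      rcases Nat.lt_or_ge i i₀ with hii | hii
      · exact hmini i hii b (by omega) hgb.symm
      · have : i = i₀ := by omega
        subst this
        have hfg : f i₀ = g j := hmeet
        have : b = j := hinjy b j (by omega) hjdy (by rw [hgb]; exact hfg)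
        omega
  have hlength : 3 ≤ C.length := by
    rw [hC]
    simp only [List.length_append, List.length_map, List.length_reverse, List.length_range]
    omega
  have hhead : C.head? = some x := by
    rw [hC, List.head?_append, List.range_succ_eq_map, List.map_cons]
    simp [hf]
  have hlast : C.getLast? = some y := by
    rw [hC]
    cases j with
    | zero =>
      have hm0 : f i₀ = y := hmeet
      rw [List.range_zero, List.map_nil, List.reverse_nil, List.append_nil]
      rw [List.range_succ, List.map_append, List.getLast?_append]
      simp [hm0]
    | succ j' =>
      rw [List.getLast?_append]
      have : ((List.range (j'+1)).map g).reverse.getLast? = some y := by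
        rw [List.getLast?_reverse, List.range_succ_eq_map, List.map_cons]
        simp [hg]
      rw [this]
      rfl
  exact cycle_false C hchain hnodup hlength
    (fun a b ha hb => by
      rw [hhead] at ha
      rw [hlast] at hb
      rw [← Option.some.inj ha, ← Option.some.inj hb]
      exact hxy.symm)

/-- root each tree of the block forest `F` at an arbitrary vertex of `V`
(this rooting is encoded by a parent function: roots are fixed points and are
vertices of `V`, every parent is adjacent in `F`, iterating parent eventually
stabilizes at the root, and each connected component has a unique root).
Then two distinct vertices `u,w` of `G` are vertex-resilient iff `u` and `w`
are siblings in the rooted forest or one is the grandparent of the other. -/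
theorem stmt13 (E : V → V → Prop)
    (parent : (V ⊕ {B : Set V // IsVRBlock E B}) → (V ⊕ {B : Set V // IsVRBlock E B}))
    (hadj : ∀ x, parent x = x ∨ (blockGraph E).Adj x (parent x))
    (hroot : ∀ x, parent x = x → ∃ r : V, x = Sum.inl r)
    (hfix : ∀ x, ∃ n : ℕ, parent^[n + 1] x = parent^[n] x)
    (huniq : ∀ x y, (blockGraph E).Reachable x y →
      parent x = x → parent y = y → x = y)
    (u w : V) (huw : u ≠ w) :
    VRes E u w ↔
      (parent (Sum.inl u) = parent (Sum.inl w) ∨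
       parent (parent (Sum.inl w)) = Sum.inl u ∨
       parent (parent (Sum.inl u)) = Sum.inl w) := by
  constructor
  · intro hvr
    obtain ⟨B, hB, huB, hwB⟩ := exists_block hvr
    have hadjU : (blockGraph E).Adj (Sum.inl u) (Sum.inr ⟨B, hB⟩) :=
      ⟨u, ⟨B, hB⟩, huB, Or.inl ⟨rfl, rfl⟩⟩
    have hadjW : (blockGraph E).Adj (Sum.inl w) (Sum.inr ⟨B, hB⟩) :=
      ⟨w, ⟨B, hB⟩, hwB, Or.inl ⟨rfl, rfl⟩⟩
    rcases parent_tree_adj hadj hfix huniq hadjU with h1 | h1 <;>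
      rcases parent_tree_adj hadj hfix huniq hadjW with h2 | h2
    · exact Or.inl (h1.trans h2.symm)
    · right; right; rw [h1]; exact h2
    · right; left; rw [h2]; exact h1
    · exact absurd (Sum.inl.inj (h1.symm.trans h2)) huw
  · intro h
    rcases h with h | h | h
    · -- siblings
      rcases hadj (Sum.inl u) with he | ha
      · exfalso
        rw [he] at h
        rcases hadj (Sum.inl w) with he2 | ha2
        · rw [he2] at h
          exact huw (Sum.inl.inj h)
        · rw [← h] at ha2
          obtain ⟨B', hB', _⟩ := adj_inl ha2
          simp at hB'
      · obtain ⟨Bs, heq, huB⟩ := adj_inl ha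
        rw [heq] at h
        rcases hadj (Sum.inl w) with he2 | ha2
        · rw [he2] at h; simp at h
        · obtain ⟨Bs', heq', hwB⟩ := adj_inl ha2
          rw [heq'] at h
          rw [← Sum.inr.inj h] at hwB
          exact Bs.2.1 huB hwB huw
    · -- u is the grandparent of w
      rcases hadj (Sum.inl w) with he | ha
      · exfalso
        rw [he, he] at h
        exact huw (Sum.inl.inj h).symm
      · obtain ⟨Bs, heq, hwB⟩ := adj_inl ha
        rw [heq] at h
        rcases hadj (Sum.inr Bs) with he2 | ha2
        · rw [he2] at h; simp at h
        · rw [h] at ha2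
          obtain ⟨a, ha', haB⟩ := adj_inr ha2
          rw [← Sum.inl.inj ha'] at haB
          exact Bs.2.1 haB hwB huw
    · -- w is the grandparent of u
      rcases hadj (Sum.inl u) with he | ha
      · exfalso
        rw [he, he] at h
        exact huw (Sum.inl.inj h)
      · obtain ⟨Bs, heq, huB⟩ := adj_inl ha
        rw [heq] at h
        rcases hadj (Sum.inr Bs) with he2 | ha2
        · rw [he2] at h; simp at h
        · rw [h] at ha2
          obtain ⟨a, ha', haB⟩ := adj_inr ha2
          rw [← Sum.inl.inj ha'] at haB
          exact Bs.2.1 huB haB huw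
end
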